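/- Let f : ℝ^d → ℝ be twice continuously differentiable satisfying −diag(L) ⪯ H(x) ⪯ diag(L) for all x, where L ∈ ℝ^d has nonnegative entries and H is the Hessian. Then for any sign vector s ∈ {−1,+1}^d, any x ∈ ℝ^d and any ε > 0, ‖∇f(x + εs) − ∇f(x)‖₁ ≤ 2ε‖L‖₁. -/

import Mathlib

open InnerProductSpace

theorem gradient_l1_perturbation_bound {d : ℕ}
    (f : EuclideanSpace ℝ (Fin d) → ℝ) (hf : ContDiff ℝ 2 f)
    (L : Fin d → ℝ) (hL : ∀ i, 0 ≤ L i)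
    -- `−diag(L) ⪯ H(x) ⪯ diag(L)` expressed via the quadratic form of the Hessian
    (hHess : ∀ x v : EuclideanSpace ℝ (Fin d),
      |(inner ℝ v ((fderiv ℝ (gradient f) x) v) : ℝ)| ≤ ∑ i, L i * (v i) ^ 2)
    (s : EuclideanSpace ℝ (Fin d)) (hs : ∀ i, s i = 1 ∨ s i = -1)
    (x : EuclideanSpace ℝ (Fin d)) (ε : ℝ) (hε : 0 < ε) :
    ∑ i, |gradient f (x + ε • s) i - gradient f x i| ≤ 2 * ε * ∑ i, L i := by
  have hdf : Differentiable ℝ f := hf.differentiable two_ne_zero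
  have hf1 : ContDiff ℝ 1 (fderiv ℝ f) := hf.fderiv_right (by norm_num)
  have hdf' : Differentiable ℝ (fderiv ℝ f) := hf1.differentiable one_ne_zero
  set e : (EuclideanSpace ℝ (Fin d) →L[ℝ] ℝ) ≃L[ℝ] EuclideanSpace ℝ (Fin d) :=
    (toDual ℝ (EuclideanSpace ℝ (Fin d))).symm.toContinuousLinearEquiv with he
  have hgradeq : gradient f = fun y => e (fderiv ℝ f y) := rfl
  have hgrad : Differentiable ℝ (gradient f) := by
    rw [hgradeq]
    exact fun y => (e.differentiableAt).comp y (hdf' y)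
  have hfd : ∀ y, fderiv ℝ (gradient f) y =
      (e : (EuclideanSpace ℝ (Fin d) →L[ℝ] ℝ) →L[ℝ] EuclideanSpace ℝ (Fin d)).comp
        (fderiv ℝ (fderiv ℝ f) y) := by
    intro y
    rw [hgradeq]
    exact e.comp_fderiv (f := fderiv ℝ f) (x := y)
  set B : EuclideanSpace ℝ (Fin d) → EuclideanSpace ℝ (Fin d) → EuclideanSpace ℝ (Fin d) → ℝ :=
    fun y v w => (inner ℝ v ((fderiv ℝ (gradient f) y) w) : ℝ) with hB
  have hBval : ∀ y v w, B y v w = fderiv ℝ (fderiv ℝ f) y w v := by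
    intro y v w
    rw [hB]
    simp only [hfd y, ContinuousLinearMap.comp_apply]
    rw [real_inner_comm]
    exact toDual_symm_apply
  have hBsymm : ∀ y v w, B y v w = B y w v := by
    intro y v w
    rw [hBval, hBval]
    exact second_derivative_symmetric (fun z => (hdf z).hasFDerivAt) (hdf' y).hasFDerivAt w v
  have hQ : ∀ y v, |B y v v| ≤ ∑ i, L i * (v i) ^ 2 := fun y v => hHess y v
  have hs2 : ∀ i, (s i) ^ 2 = 1 := by
    intro i
    rcases hs i with h | h <;> rw [h] <;> norm_num
  set g : EuclideanSpace ℝ (Fin d) := gradient f (x + ε • s) - gradient f x with hg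
  set σ : EuclideanSpace ℝ (Fin d) := WithLp.toLp 2 (fun i => if 0 ≤ g i then (1 : ℝ) else -1) with hσ
  have hσi : ∀ i, σ i = if 0 ≤ g i then (1 : ℝ) else -1 := fun i => rfl
  have hσ2 : ∀ i, (σ i) ^ 2 = 1 := by
    intro i
    rw [hσi]
    split <;> norm_num
  -- polarization bound : |B y σ s| ≤ ∑ L
  have hBσs : ∀ y, |B y σ s| ≤ ∑ i, L i := by
    intro y
    have hadd : ∀ v w, B y (v + w) (v + w) = B y v v + B y v w + B y w v + B y w w := by
      intro v w
      simp only [hB, inner_add_left, map_add, inner_add_right]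
      ring
    have hsub : ∀ v w, B y (v - w) (v - w) = B y v v - B y v w - B y w v + B y w w := by
      intro v w
      simp only [hB, inner_sub_left, map_sub, inner_sub_right]
      ring
    have hpol : B y σ s = (B y (σ + s) (σ + s) - B y (σ - s) (σ - s)) / 4 := by
      rw [hadd, hsub, hBsymm y s σ]; ring
    have h1 := hQ y (σ + s)
    have h2 := hQ y (σ - s)
    have hsum : (∑ i, L i * ((σ + s) i) ^ 2) + (∑ i, L i * ((σ - s) i) ^ 2)
        = 4 * ∑ i, L i := by
      rw [← Finset.sum_add_distrib, Finset.mul_sum]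
      apply Finset.sum_congr rfl
      intro i _
      have e1 : (σ + s) i = σ i + s i := rfl
      have e2 : (σ - s) i = σ i - s i := rfl
      rw [e1, e2]
      linear_combination (2 * L i) * hσ2 i + (2 * L i) * hs2 i
    rw [hpol, abs_div, abs_of_pos (by norm_num : (0:ℝ) < 4),
      div_le_iff₀ (by norm_num : (0:ℝ) < 4)]
    calc |B y (σ + s) (σ + s) - B y (σ - s) (σ - s)|
        ≤ |B y (σ + s) (σ + s)| + |B y (σ - s) (σ - s)| := abs_sub _ _
      _ ≤ (∑ i, L i * ((σ + s) i) ^ 2) + (∑ i, L i * ((σ - s) i) ^ 2) := add_le_add h1 h2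
      _ = 4 * ∑ i, L i := hsum
      _ = (∑ i, L i) * 4 := by ring
  -- the scalar function φ and its derivative
  set φ : ℝ → ℝ := fun t => (inner ℝ σ (gradient f (x + t • (ε • s))) : ℝ) with hφ
  have hφderiv : ∀ t : ℝ, HasDerivAt φ (B (x + t • (ε • s)) σ (ε • s)) t := by
    intro t
    have hγ : HasDerivAt (fun t : ℝ => x + t • (ε • s)) (ε • s) t := by
      simpa using ((hasDerivAt_id t).smul_const (ε • s)).const_add x
    have h2 : HasDerivAt (fun t : ℝ => gradient f (x + t • (ε • s)))
        ((fderiv ℝ (gradient f) (x + t • (ε • s))) (ε • s)) t :=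
      (hgrad _).hasFDerivAt.comp_hasDerivAt t hγ
    exact (innerSL ℝ σ).hasFDerivAt.comp_hasDerivAt t h2
  have hbound : ∀ t : ℝ, ‖B (x + t • (ε • s)) σ (ε • s)‖ ≤ ε * ∑ i, L i := by
    intro t
    have hsm : B (x + t • (ε • s)) σ (ε • s) = ε * B (x + t • (ε • s)) σ s := by
      simp only [hB, map_smul, inner_smul_right]
    rw [Real.norm_eq_abs, hsm, abs_mul, abs_of_pos hε]
    exact mul_le_mul_of_nonneg_left (hBσs _) hε.le
  have key : ‖φ 1 - φ 0‖ ≤ (ε * ∑ i, L i) * ‖(1 : ℝ) - 0‖ :=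
    convex_univ.norm_image_sub_le_of_norm_hasDerivWithin_le
      (fun t _ => (hφderiv t).hasDerivWithinAt) (fun t _ => hbound t)
      (Set.mem_univ 0) (Set.mem_univ 1)
  have hφ1 : φ 1 - φ 0 = (inner ℝ σ g : ℝ) := by
    simp only [hφ, one_smul, zero_smul, add_zero, hg, inner_sub_right]
  have hinner : (inner ℝ σ g : ℝ) = ∑ i, |g i| := by
    rw [PiLp.inner_apply]
    apply Finset.sum_congr rfl
    intro i _
    simp only [RCLike.inner_apply, conj_trivial, hσi]
    split_ifs with h
    · rw [mul_one, abs_of_nonneg h]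
    · rw [mul_neg_one, abs_of_neg (lt_of_not_ge h)]
  have hL0 : 0 ≤ ∑ i, L i := Finset.sum_nonneg fun i _ => hL i
  have hfin : ∑ i, |g i| ≤ ε * ∑ i, L i := by
    have hk := key
    rw [hφ1, hinner] at hk
    simp only [sub_zero, norm_one, mul_one, Real.norm_eq_abs] at hk
    exact (le_abs_self _).trans hk
  have hgi : ∀ i, g i = gradient f (x + ε • s) i - gradient f x i := fun i => rfl
  calc ∑ i, |gradient f (x + ε • s) i - gradient f x i| = ∑ i, |g i| := by
        apply Finset.sum_congr rfl; intro i _; rw [hgi]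
    _ ≤ ε * ∑ i, L i := hfin
    _ ≤ 2 * ε * ∑ i, L i := by nlinarith
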